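/- Let T = Z(ZᵀKZ)⁻¹Zᵀ be the subdomain correction operator and P = ΨC where Ψ solves the coarse saddle point problem (KΨ + CᵀΛ = 0, CΨ = I). Then TK + P = I on ℝⁿ, i.e., the coarse interpolation and the K-harmonic subdomain correction together reproduce the identity: for every u, u = Ψ(Cu) + T(Ku). -/

import Mathlib

open Matrix

theorem bddc_splitting_identity
    (n m : ℕ) (K : Matrix (Fin n) (Fin n) ℝ) (C : Matrix (Fin m) (Fin n) ℝ)
    (Z : Matrix (Fin n) (Fin (n - m)) ℝ)
    (Ψ : Matrix (Fin n) (Fin m) ℝ) (Λ : Matrix (Fin m) (Fin m) ℝ)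
    (hK : K.PosDef) (hC : C.rank = m)
    (hCZ : C * Z = 0) (hZ : Z.rank = n - m)
    (h1 : K * Ψ + Cᵀ * Λ = 0) (h2 : C * Ψ = 1) :
    (Z * (Zᵀ * K * Z)⁻¹ * Zᵀ) * K + Ψ * C = 1 ∧
    ∀ u : Fin n → ℝ,
      u = Ψ.mulVec (C.mulVec u) +
          (Z * (Zᵀ * K * Z)⁻¹ * Zᵀ).mulVec (K.mulVec u) := by
  set M : Matrix (Fin (n - m)) (Fin (n - m)) ℝ := Zᵀ * K * Z with hM
  -- Z has injective mulVec
  have hZker : LinearMap.ker Z.mulVecLin = ⊥ := by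
    have hrn := LinearMap.finrank_range_add_finrank_ker Z.mulVecLin
    rw [Matrix.rank] at hZ
    have : Module.finrank ℝ (Fin (n - m) → ℝ) = n - m := by simp
    rw [hZ, this] at hrn
    have hker0 : Module.finrank ℝ (LinearMap.ker Z.mulVecLin) = 0 := by omega
    exact Submodule.finrank_eq_zero.mp hker0
  have hZinj : Function.Injective Z.mulVec := by
    rw [← Matrix.coe_mulVecLin]
    exact (LinearMap.ker_eq_bot).mp hZker
  -- M is positive definite
  have hMpd : M.PosDef := by
    refine Matrix.PosDef.of_dotProduct_mulVec_pos ?_ (fun x hx => ?_)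
    · have := (hK.posSemidef.conjTranspose_mul_mul_same Z).1
      simpa using this
    · have hZx : Z *ᵥ x ≠ 0 := by
        intro h
        exact hx (hZinj (by simpa using h))
      have h := hK.dotProduct_mulVec_pos hZx
      rw [star_trivial] at h
      show (0:ℝ) < star x ⬝ᵥ (Zᵀ * K * Z) *ᵥ x
      rw [star_trivial, Matrix.dotProduct_mulVec, ← Matrix.vecMul_vecMul,
        ← Matrix.vecMul_vecMul, Matrix.vecMul_transpose, ← Matrix.dotProduct_mulVec]
      rwa [Matrix.dotProduct_mulVec] at h
  have hMdet : IsUnit M.det := hMpd.det_pos.ne'.isUnit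
  have hMinv : M⁻¹ * M = 1 := Matrix.nonsing_inv_mul M hMdet
  -- ker C ≤ range Z
  have hle : LinearMap.range Z.mulVecLin ≤ LinearMap.ker C.mulVecLin := by
    rintro _ ⟨x, rfl⟩
    simp only [LinearMap.mem_ker, Matrix.mulVecLin_apply, Matrix.mulVec_mulVec, hCZ,
      Matrix.zero_mulVec]
  have hmn : m ≤ n := by
    have := C.rank_le_card_width
    simpa [hC] using this
  have hkerC : Module.finrank ℝ (LinearMap.ker C.mulVecLin) = n - m := by
    have hrn := LinearMap.finrank_range_add_finrank_ker C.mulVecLin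
    rw [Matrix.rank] at hC
    have : Module.finrank ℝ (Fin n → ℝ) = n := by simp
    rw [hC, this] at hrn
    omega
  have hrangeZ : Module.finrank ℝ (LinearMap.range Z.mulVecLin) = n - m := by
    rw [← Matrix.rank, hZ]
  have heq : LinearMap.range Z.mulVecLin = LinearMap.ker C.mulVecLin := by
    apply Submodule.eq_of_le_of_finrank_le hle
    rw [hkerC, hrangeZ]
  -- T * K * Ψ = 0
  have hKΨ : K * Ψ = -(Cᵀ * Λ) := by linear_combination (norm := noncomm_ring) h1
  have hTKΨ : (Z * M⁻¹ * Zᵀ) * K * Ψ = 0 := by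
    have : Zᵀ * (K * Ψ) = 0 := by
      rw [hKΨ, Matrix.mul_neg, ← Matrix.mul_assoc, ← Matrix.transpose_mul, hCZ]
      simp
    calc (Z * M⁻¹ * Zᵀ) * K * Ψ = Z * M⁻¹ * (Zᵀ * (K * Ψ)) := by
          simp only [Matrix.mul_assoc]
      _ = 0 := by rw [this, Matrix.mul_zero]
  -- T * K * Z = Z
  have hTKZ : (Z * M⁻¹ * Zᵀ) * K * Z = Z := by
    calc (Z * M⁻¹ * Zᵀ) * K * Z = Z * (M⁻¹ * M) := by
          rw [hM]; simp only [Matrix.mul_assoc]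
      _ = Z := by rw [hMinv, Matrix.mul_one]
  -- the vector identity
  have key : ∀ u : Fin n → ℝ,
      u = Ψ.mulVec (C.mulVec u) + (Z * M⁻¹ * Zᵀ).mulVec (K.mulVec u) := by
    intro u
    set v : Fin n → ℝ := u - Ψ.mulVec (C.mulVec u) with hv
    have hvker : v ∈ LinearMap.ker C.mulVecLin := by
      simp [LinearMap.mem_ker, Matrix.mulVecLin_apply, hv, Matrix.mulVec_sub,
        Matrix.mulVec_mulVec, ← Matrix.mul_assoc, h2]
    obtain ⟨w, hw⟩ : v ∈ LinearMap.range Z.mulVecLin := heq ▸ hvker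
    simp only [Matrix.mulVecLin_apply] at hw
    have h1' : (Z * M⁻¹ * Zᵀ).mulVec (K.mulVec v) = v := by
      rw [← hw, Matrix.mulVec_mulVec, Matrix.mulVec_mulVec, hTKZ]
    have h2' : (Z * M⁻¹ * Zᵀ).mulVec (K.mulVec (Ψ.mulVec (C.mulVec u))) = 0 := by
      rw [Matrix.mulVec_mulVec, Matrix.mulVec_mulVec, hTKΨ, Matrix.zero_mulVec]
    have : (Z * M⁻¹ * Zᵀ).mulVec (K.mulVec u) = v := by
      have hu : u = v + Ψ.mulVec (C.mulVec u) := by rw [hv]; abel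
      calc (Z * M⁻¹ * Zᵀ).mulVec (K.mulVec u)
          = (Z * M⁻¹ * Zᵀ).mulVec (K.mulVec v) +
            (Z * M⁻¹ * Zᵀ).mulVec (K.mulVec (Ψ.mulVec (C.mulVec u))) := by
            conv_lhs => rw [hu]
            rw [Matrix.mulVec_add, Matrix.mulVec_add]
        _ = v := by rw [h1', h2', add_zero]
    rw [this, hv]; abel
  refine ⟨?_, key⟩
  ext i j
  have h := congrFun (key (Pi.single j 1)) i
  rw [Matrix.mulVec_mulVec, Matrix.mulVec_mulVec] at h
  simpa [Matrix.add_apply, Matrix.one_apply, Matrix.mulVec_single, Pi.single_apply,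
    add_comm, eq_comm] using h.symm
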